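/- Let d ≥ 4 be even and let a, b be positive integers. If (a₁ a₂; a₃ a₄) ∈ GL(2,ℚ) satisfies a(a₁X + a₂Y)^d + b(a₃X + a₄Y)^d = a'X^d + b'Y^d identically for some positive integers a', b', then a₁a₂ = 0 (equivalently, the matrix is diagonal or antidiagonal). -/

import Mathlib

open Polynomial

lemma mycoeff2 (u v : ℚ) (d : ℕ) (hd2 : 2 ≤ d) :
    ((C u + C v * X) ^ d).coeff 2 = u ^ (d - 2) * v ^ 2 * d.choose 2 := by
  rcases eq_or_ne v 0 with rfl | hv
  · simp only [C_0, zero_mul, add_zero, ← C_pow, coeff_C]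
    norm_num
  · have hfac : C u + C v * X = C v * (X + C (u / v)) := by
      rw [mul_add, ← C_mul, mul_div_cancel₀ _ hv, add_comm]
    rw [hfac, mul_pow, ← C_pow, coeff_C_mul, coeff_X_add_C_pow]
    have hdd : d = (d - 2) + 2 := (Nat.sub_add_cancel hd2).symm
    rw [hdd, pow_add, div_pow]
    field_simp
    rw [Nat.add_sub_cancel]
    ring

/-- For even d ≥ 4 and positive integers a, b: if a matrix in GL(2,ℚ) transforms
aX^d + bY^d into a'X^d + b'Y^d (a', b' positive), then a₁a₂ = 0, i.e. the matrix
is diagonal or antidiagonal. -/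
theorem stmt_6 (d : ℕ) (hd : 4 ≤ d) (hev : Even d) (a b a' b' : ℤ)
    (ha : 0 < a) (hb : 0 < b) (ha' : 0 < a') (hb' : 0 < b')
    (M : Matrix (Fin 2) (Fin 2) ℚ) (hdet : M.det ≠ 0)
    (h : ∀ x y : ℚ,
      (a : ℚ) * (M 0 0 * x + M 0 1 * y) ^ d + (b : ℚ) * (M 1 0 * x + M 1 1 * y) ^ d =
        (a' : ℚ) * x ^ d + (b' : ℚ) * y ^ d) :
    M 0 0 * M 0 1 = 0 := by
  set p := M 0 0; set q := M 0 1; set r := M 1 0; set s := M 1 1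
  -- polynomial identity in one variable (substitute y = 1)
  have hpoly : (C (a : ℚ) * (C q + C p * X) ^ d + C (b : ℚ) * (C s + C r * X) ^ d : ℚ[X])
      = C (a' : ℚ) * X ^ d + C (b' : ℚ) := by
    apply Polynomial.funext
    intro t
    have := h t 1
    simp only [eval_add, eval_mul, eval_pow, eval_C, eval_X]
    linear_combination this
  have hc : ((C (a : ℚ) * (C q + C p * X) ^ d + C (b : ℚ) * (C s + C r * X) ^ d : ℚ[X])).coeff 2
      = 0 := by
    rw [hpoly]
    have h2d : (2 : ℕ) ≠ d := by omega
    rw [coeff_add, coeff_C_mul, coeff_X_pow, if_neg h2d, coeff_C]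
    norm_num
  have hd2 : 2 ≤ d := by omega
  rw [coeff_add, coeff_C_mul, coeff_C_mul, mycoeff2 q p d hd2, mycoeff2 s r d hd2] at hc
  -- nonnegativity
  have heven : Even (d - 2) := by
    rcases hev with ⟨k, hk⟩; exact ⟨k - 1, by omega⟩
  have h1 : 0 ≤ (a : ℚ) * (q ^ (d - 2) * p ^ 2 * (d.choose 2 : ℚ)) := by
    have := heven.pow_nonneg (a := q)
    positivity
  have h2 : 0 ≤ (b : ℚ) * (s ^ (d - 2) * r ^ 2 * (d.choose 2 : ℚ)) := by
    have := heven.pow_nonneg (a := s)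
    positivity
  have hzero : (a : ℚ) * (q ^ (d - 2) * p ^ 2 * (d.choose 2 : ℚ)) = 0 := by linarith
  have hchoose : (0 : ℚ) < (d.choose 2 : ℚ) := by
    have : 0 < d.choose 2 := Nat.choose_pos (by omega)
    exact_mod_cast this
  have haq : (0 : ℚ) < (a : ℚ) := by exact_mod_cast ha
  have : q ^ (d - 2) * p ^ 2 = 0 := by
    rcases mul_eq_zero.mp hzero with h' | h'
    · exact absurd h' (ne_of_gt haq)
    · rcases mul_eq_zero.mp h' with h'' | h''
      · exact h''
      · exact absurd h'' (ne_of_gt hchoose)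
  rcases mul_eq_zero.mp this with h' | h'
  · have : q = 0 := pow_eq_zero_iff (by omega : d - 2 ≠ 0) |>.mp h'
    simp [this]
  · have : p = 0 := pow_eq_zero_iff (by norm_num : (2:ℕ) ≠ 0) |>.mp h'
    simp [this]
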